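/- Let k be an algebraically closed field and A a finite-dimensional k-algebra. Then the map sending a Calabi–Yau family of traces (t_P) on all finitely generated projective right A-modules to the family of its components at the indecomposable finitely generated projective right A-modules is a bijection onto the set of families (T_P), indexed by the indecomposable finitely generated projective right A-modules P, of k-linear maps T_P : End_A(P) → k such that for all indecomposable finitely generated projectives P, Q the pairing Hom_A(P,Q) × Hom_A(Q,P) → k, (f,g) ↦ T_Q(f ∘ g), is nondegenerate and symmetric in the sense that T_Q(f ∘ g) = T_P(g ∘ f). -/

import Mathlib

universe u

/-- A bundled finitely generated projective right `A`-module (with compatible `k`-action). -/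
structure FGProj (k A : Type u) [Field k] [Ring A] [Algebra k A] : Type (u + 1) where
  carrier : Type u
  [isAddCommGroup : AddCommGroup carrier]
  [isModuleK : Module k carrier]
  [isModuleA : Module Aᵐᵒᵖ carrier]
  [isTower : IsScalarTower k Aᵐᵒᵖ carrier]
  [isFinite : Module.Finite Aᵐᵒᵖ carrier]
  [isProjective : Module.Projective Aᵐᵒᵖ carrier]

attribute [instance] FGProj.isAddCommGroup FGProj.isModuleK FGProj.isModuleA
  FGProj.isTower FGProj.isFinite FGProj.isProjective

instance (k A : Type u) [Field k] [Ring A] [Algebra k A] : CoeSort (FGProj k A) (Type u) :=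
  ⟨FGProj.carrier⟩

/-- A Calabi–Yau family of traces on the finitely generated projective right `A`-modules. -/
structure CYTraces (k A : Type u) [Field k] [Ring A] [Algebra k A] : Type (u + 1) where
  t : ∀ P : FGProj k A, ((P : Type u) →ₗ[Aᵐᵒᵖ] P) →ₗ[k] k
  cyclic : ∀ (P Q : FGProj k A) (f : (P : Type u) →ₗ[Aᵐᵒᵖ] Q) (g : (Q : Type u) →ₗ[Aᵐᵒᵖ] P),
    t P (g ∘ₗ f) = t Q (f ∘ₗ g)
  nondeg_left : ∀ (P Q : FGProj k A) (f : (P : Type u) →ₗ[Aᵐᵒᵖ] Q), f ≠ 0 →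
    ∃ g : (Q : Type u) →ₗ[Aᵐᵒᵖ] P, t Q (f ∘ₗ g) ≠ 0
  nondeg_right : ∀ (P Q : FGProj k A) (g : (Q : Type u) →ₗ[Aᵐᵒᵖ] P), g ≠ 0 →
    ∃ f : (P : Type u) →ₗ[Aᵐᵒᵖ] Q, t Q (f ∘ₗ g) ≠ 0

/-- A module is indecomposable if it is nonzero and is not an (internal) direct sum of two
nonzero submodules. -/
def IsIndecomposable (A : Type u) [Ring A] (M : Type u) [AddCommGroup M]
    [Module Aᵐᵒᵖ M] : Prop :=
  Nontrivial M ∧ ¬ ∃ N N' : Submodule Aᵐᵒᵖ M, N ≠ ⊥ ∧ N' ≠ ⊥ ∧ IsCompl N N'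

/-- A family of traces indexed by the indecomposable f.g. projective right `A`-modules. -/
def IndecFamily (k A : Type u) [Field k] [Ring A] [Algebra k A] : Type (u + 1) :=
  ∀ P : FGProj k A, IsIndecomposable A P → (((P : Type u) →ₗ[Aᵐᵒᵖ] P) →ₗ[k] k)

/-- The condition on a family of traces on indecomposable f.g. projectives: the induced
pairings are nondegenerate and symmetric. -/
def IsGoodIndecFamily (k A : Type u) [Field k] [Ring A] [Algebra k A]
    (T : IndecFamily k A) : Prop :=
  (∀ (P Q : FGProj k A) (hP : IsIndecomposable A P) (hQ : IsIndecomposable A Q)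
      (f : (P : Type u) →ₗ[Aᵐᵒᵖ] Q) (g : (Q : Type u) →ₗ[Aᵐᵒᵖ] P),
      T Q hQ (f ∘ₗ g) = T P hP (g ∘ₗ f)) ∧
  (∀ (P Q : FGProj k A) (hP : IsIndecomposable A P) (hQ : IsIndecomposable A Q)
      (f : (P : Type u) →ₗ[Aᵐᵒᵖ] Q), f ≠ 0 →
      ∃ g : (Q : Type u) →ₗ[Aᵐᵒᵖ] P, T Q hQ (f ∘ₗ g) ≠ 0) ∧
  (∀ (P Q : FGProj k A) (hP : IsIndecomposable A P) (hQ : IsIndecomposable A Q)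
      (g : (Q : Type u) →ₗ[Aᵐᵒᵖ] P), g ≠ 0 →
      ∃ f : (P : Type u) →ₗ[Aᵐᵒᵖ] Q, T Q hQ (f ∘ₗ g) ≠ 0)

section Aux

variable {k A : Type u} [Field k] [Ring A] [Algebra k A]

instance mopFinite [FiniteDimensional k A] : Module.Finite k Aᵐᵒᵖ :=
  Module.Finite.equiv (MulOpposite.opLinearEquiv k : A ≃ₗ[k] Aᵐᵒᵖ)

instance fgprojFinite [FiniteDimensional k A] (P : FGProj k A) :
    Module.Finite k (P : Type u) :=
  Module.Finite.trans Aᵐᵒᵖ (P : Type u)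

/-- A decomposition of a f.g. projective module into indecomposable summands, recorded
via inclusion and projection maps. -/
structure Decomp (P : FGProj k A) : Type (u + 1) where
  ι : Type
  [fin : Fintype ι]
  Q : ι → FGProj k A
  indec : ∀ i, IsIndecomposable A (Q i)
  inc : ∀ i, ((Q i : Type u) →ₗ[Aᵐᵒᵖ] P)
  prj : ∀ i, ((P : Type u) →ₗ[Aᵐᵒᵖ] Q i)
  prj_inc_self : ∀ i, prj i ∘ₗ inc i = LinearMap.id
  prj_inc_ne : ∀ i j, i ≠ j → prj i ∘ₗ inc j = 0
  sum_id : ∑ i, inc i ∘ₗ prj i = LinearMap.id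

attribute [instance] Decomp.fin

namespace Decomp

variable {P : FGProj k A} (D : Decomp P)

lemma prj_inc_apply_self (i : D.ι) (x : (D.Q i : Type u)) : D.prj i (D.inc i x) = x := by
  simpa using LinearMap.ext_iff.mp (D.prj_inc_self i) x

lemma prj_inc_apply_ne {i j : D.ι} (h : i ≠ j) (x : (D.Q j : Type u)) :
    D.prj i (D.inc j x) = 0 := by
  simpa using LinearMap.ext_iff.mp (D.prj_inc_ne i j h) x

lemma sum_apply (x : (P : Type u)) : ∑ i, D.inc i (D.prj i x) = x := by
  simpa using LinearMap.ext_iff.mp D.sum_id x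

/-- The empty decomposition of a zero module. -/
def empty (P : FGProj k A) (h : Subsingleton (P : Type u)) : Decomp P where
  ι := PEmpty
  Q := fun i => i.elim
  indec := fun i => i.elim
  inc := fun i => i.elim
  prj := fun i => i.elim
  prj_inc_self := fun i => i.elim
  prj_inc_ne := fun i => i.elim
  sum_id := LinearMap.ext fun _ => Subsingleton.elim _ _

/-- The one-term decomposition of an indecomposable module. -/
def single (P : FGProj k A) (h : IsIndecomposable A (P : Type u)) : Decomp P where
  ι := PUnit
  Q := fun _ => P
  indec := fun _ => h
  inc := fun _ => LinearMap.id
  prj := fun _ => LinearMap.id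
  prj_inc_self := fun _ => LinearMap.id_comp _
  prj_inc_ne := fun i j hij => absurd (Subsingleton.elim i j) hij
  sum_id := by simp

end Decomp

/-- The f.g. projective module attached to a complemented submodule. -/
@[reducible] def FGProj.ofSubCompl (P : FGProj k A) {N N' : Submodule Aᵐᵒᵖ (P : Type u)}
    (h : IsCompl N N') : FGProj k A where
  carrier := ↥N
  isFinite := Module.Finite.of_surjective (N.linearProjOfIsCompl N' h)
    (LinearMap.range_eq_top.1 (Submodule.linearProjOfIsCompl_range h))
  isProjective := Module.Projective.of_split N.subtype (N.linearProjOfIsCompl N' h)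
    (Submodule.linearProjOfIsCompl_comp_subtype h)

/-- Glue decompositions of two complementary submodules into one of the whole module. -/
noncomputable def Decomp.glue (P : FGProj k A) {N N' : Submodule Aᵐᵒᵖ (P : Type u)}
    (h : IsCompl N N') (D : Decomp (FGProj.ofSubCompl P h))
    (D' : Decomp (FGProj.ofSubCompl P h.symm)) : Decomp P where
  ι := D.ι ⊕ D'.ι
  Q := Sum.elim D.Q D'.Q
  indec := fun i => match i with
    | .inl i => D.indec i
    | .inr j => D'.indec j
  inc := fun i => match i with
    | .inl i => N.subtype ∘ₗ D.inc i
    | .inr j => N'.subtype ∘ₗ D'.inc j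
  prj := fun i => match i with
    | .inl i => D.prj i ∘ₗ N.projectionOnto N' h
    | .inr j => D'.prj j ∘ₗ N'.projectionOnto N h.symm
  prj_inc_self := by
    rintro (i | j) <;> ext x
    · show D.prj i (N.projectionOnto N' h (N.subtype (D.inc i x))) = x
      rw [show N.subtype (D.inc i x) = ((D.inc i x : ↥N) : (P : Type u)) from rfl,
        Submodule.projectionOnto_apply_left h (D.inc i x)]
      exact D.prj_inc_apply_self i x
    · show D'.prj j (N'.projectionOnto N h.symm (N'.subtype (D'.inc j x))) = x
      rw [show N'.subtype (D'.inc j x) = ((D'.inc j x : ↥N') : (P : Type u)) from rfl,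
        Submodule.projectionOnto_apply_left h.symm (D'.inc j x)]
      exact D'.prj_inc_apply_self j x
  prj_inc_ne := by
    rintro (i | i) (j | j) hij <;> ext x
    · show D.prj i (N.projectionOnto N' h (N.subtype (D.inc j x))) = 0
      rw [show N.subtype (D.inc j x) = ((D.inc j x : ↥N) : (P : Type u)) from rfl,
        Submodule.projectionOnto_apply_left h (D.inc j x)]
      exact D.prj_inc_apply_ne (fun hc => hij (congrArg Sum.inl hc)) x
    · show D.prj i (N.projectionOnto N' h (N'.subtype (D'.inc j x))) = 0
      rw [show N'.subtype (D'.inc j x) = ((D'.inc j x : ↥N') : (P : Type u)) from rfl,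
        Submodule.projectionOnto_apply_of_mem_right h (D'.inc j x).2, map_zero]
    · show D'.prj i (N'.projectionOnto N h.symm (N.subtype (D.inc j x))) = 0
      rw [show N.subtype (D.inc j x) = ((D.inc j x : ↥N) : (P : Type u)) from rfl,
        Submodule.projectionOnto_apply_of_mem_right h.symm (D.inc j x).2, map_zero]
    · show D'.prj i (N'.projectionOnto N h.symm (N'.subtype (D'.inc j x))) = 0
      rw [show N'.subtype (D'.inc j x) = ((D'.inc j x : ↥N') : (P : Type u)) from rfl,
        Submodule.projectionOnto_apply_left h.symm (D'.inc j x)]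
      exact D'.prj_inc_apply_ne (fun hc => hij (congrArg Sum.inr hc)) x
  sum_id := by
    ext x
    rw [LinearMap.sum_apply, LinearMap.id_apply, Fintype.sum_sum_type]
    have h1 : ∀ i : D.ι,
        ((N.subtype ∘ₗ D.inc i) ∘ₗ (D.prj i ∘ₗ N.projectionOnto N' h)) x
          = N.subtype (D.inc i (D.prj i (N.projectionOnto N' h x))) := fun i => rfl
    have h2 : ∀ j : D'.ι,
        ((N'.subtype ∘ₗ D'.inc j) ∘ₗ (D'.prj j ∘ₗ N'.projectionOnto N h.symm)) x
          = N'.subtype (D'.inc j (D'.prj j (N'.projectionOnto N h.symm x))) := fun j => rfl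
    show (∑ i : D.ι, N.subtype (D.inc i (D.prj i (N.projectionOnto N' h x)))) + ∑ j : D'.ι, N'.subtype (D'.inc j (D'.prj j (N'.projectionOnto N h.symm x))) = x
    rw [← map_sum, ← map_sum, D.sum_apply, D'.sum_apply]
    exact Submodule.projection_add_projection_eq_self h x

lemma finrank_coe_lt [FiniteDimensional k A] (P : FGProj k A)
    {N N' : Submodule Aᵐᵒᵖ (P : Type u)} (h : IsCompl N N') (hN' : N' ≠ ⊥) :
    Module.finrank k ((FGProj.ofSubCompl P h : FGProj k A) : Type u)
      < Module.finrank k (P : Type u) := by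
  have hNtop : N ≠ ⊤ := by
    intro hN
    apply hN'
    have hd := h.disjoint
    rw [hN] at hd
    simpa using hd.symm
  have h1 : N.restrictScalars k ≠ ⊤ := fun c =>
    hNtop ((Submodule.restrictScalars_eq_top_iff _ _ _).mp c)
  have h2 := Submodule.finrank_lt (K := k) (V := (P : Type u))
    h1
  have e : (↥(N.restrictScalars k)) ≃ₗ[k] ↥N :=
    { toFun := fun x => ⟨x.1, x.2⟩
      invFun := fun x => ⟨x.1, x.2⟩
      map_add' := fun _ _ => rfl
      map_smul' := fun _ _ => rfl
      left_inv := fun _ => rfl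
      right_inv := fun _ => rfl }
  calc Module.finrank k ↥N = Module.finrank k ↥(N.restrictScalars k) := (e.finrank_eq).symm
    _ < Module.finrank k (P : Type u) := h2

lemma nonempty_decomp [FiniteDimensional k A] (P : FGProj k A) : Nonempty (Decomp P) := by
  suffices H : ∀ (n : ℕ) (P : FGProj k A), Module.finrank k (P : Type u) ≤ n →
      Nonempty (Decomp P) from H _ P le_rfl
  intro n
  induction n with
  | zero =>
    intro P hP
    rcases subsingleton_or_nontrivial (P : Type u) with hs | hnt
    · exact ⟨Decomp.empty P hs⟩
    · exact absurd (Nat.le_zero.mp hP) (Module.finrank_pos (R := k) (M := (P : Type u))).ne'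
  | succ n IH =>
    intro P hP
    rcases subsingleton_or_nontrivial (P : Type u) with hs | hnt
    · exact ⟨Decomp.empty P hs⟩
    by_cases hind : IsIndecomposable A (P : Type u)
    · exact ⟨Decomp.single P hind⟩
    obtain ⟨N, N', hN, hN', hc⟩ :
        ∃ N N' : Submodule Aᵐᵒᵖ (P : Type u), N ≠ ⊥ ∧ N' ≠ ⊥ ∧ IsCompl N N' := by
      by_contra hcon
      push_neg at hcon
      refine hind ⟨hnt, ?_⟩
      rintro ⟨N, N', h1, h2, h3⟩
      exact (hcon N N' h1 h2) h3
    have l1 := finrank_coe_lt P hc hN'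
    have l2 := finrank_coe_lt P hc.symm hN
    obtain ⟨D⟩ := IH (FGProj.ofSubCompl P hc)
      (Nat.lt_succ_iff.mp (lt_of_lt_of_le l1 hP))
    obtain ⟨D'⟩ := IH (FGProj.ofSubCompl P hc.symm)
      (Nat.lt_succ_iff.mp (lt_of_lt_of_le l2 hP))
    exact ⟨Decomp.glue P hc D D'⟩

open scoped Classical in
/-- A chosen decomposition, which is the trivial one for indecomposable modules. -/
noncomputable def decompOf [FiniteDimensional k A] (P : FGProj k A) : Decomp P :=
  if h : IsIndecomposable A (P : Type u) then Decomp.single P h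
  else (nonempty_decomp P).some

/-- Conjugation by a pair of maps, as a `k`-linear map on endomorphism spaces. -/
def conjL {P Q : FGProj k A} (i : (Q : Type u) →ₗ[Aᵐᵒᵖ] P) (p : (P : Type u) →ₗ[Aᵐᵒᵖ] Q) :
    ((P : Type u) →ₗ[Aᵐᵒᵖ] P) →ₗ[k] ((Q : Type u) →ₗ[Aᵐᵒᵖ] Q) where
  toFun f := p ∘ₗ f ∘ₗ i
  map_add' f g := by ext x; simp
  map_smul' c f := by ext x; simp

/-- The lift of a family of traces on indecomposables to all f.g. projectives. -/
noncomputable def liftT [FiniteDimensional k A] (T : IndecFamily k A) (P : FGProj k A) :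
    ((P : Type u) →ₗ[Aᵐᵒᵖ] P) →ₗ[k] k :=
  ∑ i, (T ((decompOf P).Q i) ((decompOf P).indec i)) ∘ₗ
    conjL ((decompOf P).inc i) ((decompOf P).prj i)

lemma liftT_apply [FiniteDimensional k A] (T : IndecFamily k A) (P : FGProj k A)
    (f : (P : Type u) →ₗ[Aᵐᵒᵖ] P) :
    liftT T P f = ∑ i, T ((decompOf P).Q i) ((decompOf P).indec i)
      ((decompOf P).prj i ∘ₗ f ∘ₗ (decompOf P).inc i) := by
  simp [liftT, conjL]

lemma insert_id {P Q : FGProj k A} (D : Decomp P) (E : Decomp Q)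
    (f : (P : Type u) →ₗ[Aᵐᵒᵖ] Q) (g : (Q : Type u) →ₗ[Aᵐᵒᵖ] P) (i : D.ι) :
    D.prj i ∘ₗ (g ∘ₗ f) ∘ₗ D.inc i
      = ∑ j, (D.prj i ∘ₗ g ∘ₗ E.inc j) ∘ₗ (E.prj j ∘ₗ f ∘ₗ D.inc i) := by
  ext x
  rw [LinearMap.sum_apply]
  have h1 : ∀ j, ((D.prj i ∘ₗ g ∘ₗ E.inc j) ∘ₗ (E.prj j ∘ₗ f ∘ₗ D.inc i)) x
      = D.prj i (g (E.inc j (E.prj j (f (D.inc i x))))) := fun j => rfl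
  simp only [h1]
  rw [← map_sum, ← map_sum, E.sum_apply]
  rfl

lemma liftT_comp [FiniteDimensional k A] (T : IndecFamily k A) (P Q : FGProj k A)
    (f : (P : Type u) →ₗ[Aᵐᵒᵖ] Q) (g : (Q : Type u) →ₗ[Aᵐᵒᵖ] P) :
    liftT T P (g ∘ₗ f) = ∑ i, ∑ j,
      T ((decompOf P).Q i) ((decompOf P).indec i)
        (((decompOf P).prj i ∘ₗ g ∘ₗ (decompOf Q).inc j)
          ∘ₗ ((decompOf Q).prj j ∘ₗ f ∘ₗ (decompOf P).inc i)) := by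
  rw [liftT_apply]
  refine Finset.sum_congr rfl fun i _ => ?_
  rw [insert_id (decompOf P) (decompOf Q) f g i, map_sum]

lemma exists_block_ne [FiniteDimensional k A] {P Q : FGProj k A}
    (f : (P : Type u) →ₗ[Aᵐᵒᵖ] Q) (hf : f ≠ 0) :
    ∃ (i : (decompOf P).ι) (j : (decompOf Q).ι),
      (decompOf Q).prj j ∘ₗ f ∘ₗ (decompOf P).inc i ≠ 0 := by
  set D := decompOf P
  set E := decompOf Q
  by_contra hcon
  push_neg at hcon
  apply hf
  ext x
  rw [LinearMap.zero_apply]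
  conv_lhs => rw [← D.sum_apply x]
  rw [map_sum]
  refine Finset.sum_eq_zero fun i _ => ?_
  conv_lhs => rw [← E.sum_apply (f (D.inc i (D.prj i x)))]
  refine Finset.sum_eq_zero fun j _ => ?_
  have h0 : E.prj j (f (D.inc i (D.prj i x))) = 0 := by
    simpa using LinearMap.ext_iff.mp (hcon i j) (D.prj i x)
  rw [h0, map_zero]

lemma liftT_indec [FiniteDimensional k A] (T : IndecFamily k A) (P : FGProj k A)
    (hP : IsIndecomposable A (P : Type u)) : liftT T P = T P hP := by
  refine LinearMap.ext fun f => ?_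
  rw [liftT_apply]
  have hdec : decompOf P = Decomp.single P hP := by
    unfold decompOf
    rw [dif_pos hP]
  rw [hdec]
  simp [Decomp.single]
  exact (Fintype.sum_unique _).trans rfl

lemma cy_eq_sum [FiniteDimensional k A] (t : CYTraces k A) (P : FGProj k A)
    (f : (P : Type u) →ₗ[Aᵐᵒᵖ] P) :
    t.t P f = ∑ i, t.t ((decompOf P).Q i)
      ((decompOf P).prj i ∘ₗ (f ∘ₗ (decompOf P).inc i)) := by
  set D := decompOf P
  have hf : f = ∑ i, (f ∘ₗ D.inc i) ∘ₗ D.prj i := by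
    ext x
    rw [LinearMap.sum_apply]
    have h1 : ∀ i, ((f ∘ₗ D.inc i) ∘ₗ D.prj i) x = f (D.inc i (D.prj i x)) := fun i => rfl
    simp only [h1]
    rw [← map_sum, D.sum_apply]
  conv_lhs => rw [hf]
  rw [map_sum]
  exact Finset.sum_congr rfl fun i _ => t.cyclic P (D.Q i) (D.prj i) (f ∘ₗ D.inc i)

lemma CYTraces.ext' {t t' : CYTraces k A} (h : t.t = t'.t) : t = t' := by
  cases t; cases t'; cases h; rfl

end Aux

/-- Restriction of a Calabi–Yau family of traces to the indecomposable
f.g. projective right `A`-modules is a bijection onto the set of families of traces on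
indecomposables with symmetric nondegenerate pairings: every restriction is such a family,
and every such family lifts uniquely to a Calabi–Yau family. -/
theorem cy_traces_restriction_to_indecomposables_bijective
    (k A : Type u) [Field k] [IsAlgClosed k] [Ring A] [Algebra k A] [FiniteDimensional k A] :
    (∀ t : CYTraces k A,
      IsGoodIndecFamily k A (fun (P : FGProj k A) (_ : IsIndecomposable A ↑P) => t.t P)) ∧
    (∀ T : IndecFamily k A, IsGoodIndecFamily k A T →
      ∃! t : CYTraces k A, (fun (P : FGProj k A) (_ : IsIndecomposable A ↑P) => t.t P) = T) := by
  constructor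
  · intro t
    exact ⟨fun P Q hP hQ f g => (t.cyclic P Q f g).symm,
      fun P Q hP hQ f hf => t.nondeg_left P Q f hf,
      fun P Q hP hQ g hg => t.nondeg_right P Q g hg⟩
  · intro T hT
    obtain ⟨hsym, hleft, hright⟩ := hT
    refine ⟨⟨liftT T, ?_, ?_, ?_⟩, ?_, ?_⟩
    · -- cyclicity
      intro P Q f g
      rw [liftT_comp T P Q f g, liftT_comp T Q P g f, Finset.sum_comm]
      refine Finset.sum_congr rfl fun j _ => Finset.sum_congr rfl fun i _ => ?_
      exact hsym _ _ _ _ _ _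
    · -- left nondegeneracy
      intro P Q f hf
      obtain ⟨i, j, hij⟩ := exists_block_ne f hf
      obtain ⟨g', hg'⟩ := hleft ((decompOf P).Q i) ((decompOf Q).Q j)
        ((decompOf P).indec i) ((decompOf Q).indec j) _ hij
      refine ⟨(decompOf P).inc i ∘ₗ g' ∘ₗ (decompOf Q).prj j, ?_⟩
      rw [liftT_apply]
      have hz : ∀ l ∈ Finset.univ, l ≠ j →
          T ((decompOf Q).Q l) ((decompOf Q).indec l)
            ((decompOf Q).prj l ∘ₗ (f ∘ₗ ((decompOf P).inc i ∘ₗ g' ∘ₗ (decompOf Q).prj j)) ∘ₗ (decompOf Q).inc l) = 0 := by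
        intro l _ hlj
        have hm : (decompOf Q).prj l ∘ₗ (f ∘ₗ ((decompOf P).inc i ∘ₗ g' ∘ₗ (decompOf Q).prj j)) ∘ₗ (decompOf Q).inc l = 0 := by
          ext x
          show (decompOf Q).prj l (f ((decompOf P).inc i (g' ((decompOf Q).prj j ((decompOf Q).inc l x))))) = 0
          rw [(decompOf Q).prj_inc_apply_ne (Ne.symm hlj)]
          simp
        rw [hm, map_zero]
      rw [Finset.sum_eq_single j hz (fun h => absurd (Finset.mem_univ j) h)]
      have hm : (decompOf Q).prj j ∘ₗ (f ∘ₗ ((decompOf P).inc i ∘ₗ g' ∘ₗ (decompOf Q).prj j)) ∘ₗ (decompOf Q).inc j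
          = ((decompOf Q).prj j ∘ₗ f ∘ₗ (decompOf P).inc i) ∘ₗ g' := by
        ext x
        show (decompOf Q).prj j (f ((decompOf P).inc i (g' ((decompOf Q).prj j ((decompOf Q).inc j x)))))
          = (decompOf Q).prj j (f ((decompOf P).inc i (g' x)))
        rw [(decompOf Q).prj_inc_apply_self]
      rw [hm]
      exact hg'
    · -- right nondegeneracy
      intro P Q g hg
      obtain ⟨i, j, hij⟩ := exists_block_ne g hg
      obtain ⟨f', hf'⟩ := hright ((decompOf P).Q j) ((decompOf Q).Q i)
        ((decompOf P).indec j) ((decompOf Q).indec i) _ hij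
      refine ⟨(decompOf Q).inc i ∘ₗ f' ∘ₗ (decompOf P).prj j, ?_⟩
      rw [liftT_apply]
      have hz : ∀ l ∈ Finset.univ, l ≠ i →
          T ((decompOf Q).Q l) ((decompOf Q).indec l)
            ((decompOf Q).prj l ∘ₗ (((decompOf Q).inc i ∘ₗ f' ∘ₗ (decompOf P).prj j) ∘ₗ g) ∘ₗ (decompOf Q).inc l) = 0 := by
        intro l _ hli
        have hm : (decompOf Q).prj l ∘ₗ (((decompOf Q).inc i ∘ₗ f' ∘ₗ (decompOf P).prj j) ∘ₗ g) ∘ₗ (decompOf Q).inc l = 0 := by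
          ext x
          show (decompOf Q).prj l ((decompOf Q).inc i (f' ((decompOf P).prj j (g ((decompOf Q).inc l x))))) = 0
          rw [(decompOf Q).prj_inc_apply_ne hli]
        rw [hm, map_zero]
      rw [Finset.sum_eq_single i hz (fun h => absurd (Finset.mem_univ i) h)]
      have hm : (decompOf Q).prj i ∘ₗ (((decompOf Q).inc i ∘ₗ f' ∘ₗ (decompOf P).prj j) ∘ₗ g) ∘ₗ (decompOf Q).inc i
          = f' ∘ₗ ((decompOf P).prj j ∘ₗ g ∘ₗ (decompOf Q).inc i) := by
        ext x
        show (decompOf Q).prj i ((decompOf Q).inc i (f' ((decompOf P).prj j (g ((decompOf Q).inc i x)))))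
          = f' ((decompOf P).prj j (g ((decompOf Q).inc i x)))
        rw [(decompOf Q).prj_inc_apply_self]
      rw [hm]
      exact hf'
    · -- the lift restricts to T
      funext P hP
      exact liftT_indec T P hP
    · -- uniqueness
      intro t ht
      refine CYTraces.ext' (funext fun P => LinearMap.ext fun f => ?_)
      show t.t P f = liftT T P f
      rw [cy_eq_sum t P f, liftT_apply]
      refine Finset.sum_congr rfl fun i _ => ?_
      have h1 : t.t ((decompOf P).Q i) = T ((decompOf P).Q i) ((decompOf P).indec i) :=
        congrFun (congrFun ht ((decompOf P).Q i)) ((decompOf P).indec i)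
      rw [h1]
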